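/- Let p ≥ 1 and N ≥ 0 be integers, k a real number, and x_1,…,x_p real numbers. Then Σ over all (j_1,…,j_{2p}) ∈ ℕ^{2p} with j_1+⋯+j_{2p} = 2N of (−1)^{j_1+⋯+j_p} (Π_{s=1}^{2p} (k)_{j_s}/j_s!) (Π_{s=1}^p x_s^{j_s+j_{s+p}}) equals Σ over all (m_1,…,m_p) ∈ ℕ^p with m_1+⋯+m_p = N of Π_{s=1}^p (k)_{m_s} x_s^{2m_s} / m_s!. -/

import Mathlib

open Real MeasureTheory

/-- Pochhammer symbol `(a)_m = a(a+1)⋯(a+m-1)`. -/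
noncomputable def poch (a : ℝ) (m : ℕ) : ℝ := (ascPochhammer ℝ m).eval a

/-- Confluent hypergeometric function `₁F₁(a, c; z)`. -/
noncomputable def oneF1 (a c z : ℝ) : ℝ :=
  ∑' m : ℕ, poch a m / poch c m * z ^ m / (Nat.factorial m)

/-- Gegenbauer (ultraspherical) polynomial `C_j^{(k)}(x)`. -/
noncomputable def geg (j : ℕ) (k x : ℝ) : ℝ :=
  ∑ l ∈ Finset.range (j / 2 + 1),
    (-1 : ℝ) ^ l * poch k (j - l) / ((Nat.factorial l : ℝ) * (Nat.factorial (j - 2 * l))) *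
      (2 * x) ^ (j - 2 * l)

/-- Integral over the standard simplex `Σ_p` in the coordinates `(u_1, …, u_{p-1})`,
with `u_p := 1 - u_1 - ⋯ - u_{p-1}`. -/
noncomputable def simplexIntegral (p : ℕ) (f : (Fin p → ℝ) → ℝ) : ℝ :=
  ∫ u in {u : Fin (p - 1) → ℝ | (∀ s, 0 ≤ u s) ∧ ∑ s, u s ≤ 1},
    f (fun i => if h : (i : ℕ) < p - 1 then u ⟨i, h⟩ else 1 - ∑ s, u s)


section Aux

noncomputable def pb (k : ℝ) (j : ℕ) : ℝ := poch k j / (Nat.factorial j)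
noncomputable def pa (k : ℝ) (i : ℕ) : ℝ := (-1 : ℝ) ^ i * pb k i

lemma poch_zero (k : ℝ) : poch k 0 = 1 := by simp [poch]
lemma poch_succ (k : ℝ) (m : ℕ) : poch k (m + 1) = poch k m * (k + m) := by
  simp [poch, ascPochhammer_succ_right]
lemma fact_ne (j : ℕ) : ((Nat.factorial j : ℝ)) ≠ 0 := by
  exact_mod_cast j.factorial_ne_zero
lemma pb_succ (k : ℝ) (j : ℕ) : ((j : ℝ) + 1) * pb k (j + 1) = (k + j) * pb k j := by
  have h := fact_ne j
  have h2 : ((j : ℝ) + 1) ≠ 0 := by positivity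
  simp only [pb, poch_succ, Nat.factorial_succ]
  push_cast
  field_simp
lemma pa_succ (k : ℝ) (i : ℕ) : ((i : ℝ) + 1) * pa k (i + 1) = -(k + i) * pa k i := by
  have h := pb_succ k i
  simp only [pa, pow_succ]
  linear_combination ((-1:ℝ)^i * (-1)) * h

noncomputable def pp (k : ℝ) (n : ℕ) : ℝ := ∑ i ∈ Finset.range (n + 1), pa k i * pb k (n - i)

lemma pp_rec (k : ℝ) (n : ℕ) :
    ((n : ℝ) + 2) * pp k (n + 2) = ((n : ℝ) + 2 * k) * pp k n := by
  set a := pa k with ha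
  set b := pb k with hb
  have S1eq : (∑ i ∈ Finset.range (n + 3), (i : ℝ) * (a i * b (n + 2 - i)))
      = ∑ i ∈ Finset.range (n + 2), (-(k + i)) * (a i * b (n + 1 - i)) := by
    rw [Finset.sum_range_succ']
    simp only [Nat.cast_zero, zero_mul, add_zero]
    refine Finset.sum_congr rfl fun i _ => ?_
    have h2 : n + 2 - (i + 1) = n + 1 - i := by omega
    rw [h2]
    push_cast
    linear_combination b (n + 1 - i) * pa_succ k i
  have S2eq : (∑ i ∈ Finset.range (n + 3), ((n + 2 - i : ℕ) : ℝ) * (a i * b (n + 2 - i)))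
      = ∑ i ∈ Finset.range (n + 2), (k + ((n : ℝ) + 1 - i)) * (a i * b (n + 1 - i)) := by
    rw [Finset.sum_range_succ]
    simp only [Nat.sub_self, Nat.cast_zero, zero_mul, add_zero]
    refine Finset.sum_congr rfl fun i hi => ?_
    rw [Finset.mem_range] at hi
    have h2 : n + 2 - i = (n + 1 - i) + 1 := by omega
    have h3 : ((n + 1 - i : ℕ) : ℝ) = (n : ℝ) + 1 - i := by
      have : i ≤ n + 1 := by omega
      push_cast [Nat.cast_sub this]; ring
    rw [h2]
    push_cast [h3]
    have h4 := pb_succ k (n + 1 - i)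
    rw [h3] at h4
    linear_combination a i * h4
  have T1eq : (∑ i ∈ Finset.range (n + 2), (i : ℝ) * (a i * b (n + 1 - i)))
      = ∑ i ∈ Finset.range (n + 1), (-(k + i)) * (a i * b (n - i)) := by
    rw [Finset.sum_range_succ']
    simp only [Nat.cast_zero, zero_mul, add_zero]
    refine Finset.sum_congr rfl fun i _ => ?_
    have h2 : n + 1 - (i + 1) = n - i := by omega
    rw [h2]
    push_cast
    linear_combination b (n - i) * pa_succ k i
  have T2eq : (∑ i ∈ Finset.range (n + 2), ((n + 1 - i : ℕ) : ℝ) * (a i * b (n + 1 - i)))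
      = ∑ i ∈ Finset.range (n + 1), (k + ((n : ℝ) - i)) * (a i * b (n - i)) := by
    rw [Finset.sum_range_succ]
    simp only [Nat.sub_self, Nat.cast_zero, zero_mul, add_zero]
    refine Finset.sum_congr rfl fun i hi => ?_
    rw [Finset.mem_range] at hi
    have h2 : n + 1 - i = (n - i) + 1 := by omega
    have h3 : ((n - i : ℕ) : ℝ) = (n : ℝ) - i := by
      have : i ≤ n := by omega
      push_cast [Nat.cast_sub this]; ring
    rw [h2]
    push_cast [h3]
    have h4 := pb_succ k (n - i)
    rw [h3] at h4
    linear_combination a i * h4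
  have main : ((n : ℝ) + 2) * pp k (n + 2)
      = (∑ i ∈ Finset.range (n + 3), (i : ℝ) * (a i * b (n + 2 - i)))
        + ∑ i ∈ Finset.range (n + 3), ((n + 2 - i : ℕ) : ℝ) * (a i * b (n + 2 - i)) := by
    rw [pp, Finset.mul_sum, ← Finset.sum_add_distrib]
    refine Finset.sum_congr rfl fun i hi => ?_
    rw [Finset.mem_range] at hi
    have h3 : ((n + 2 - i : ℕ) : ℝ) = (n : ℝ) + 2 - i := by
      have : i ≤ n + 2 := by omega
      push_cast [Nat.cast_sub this]; ring
    rw [h3]; ring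
  have mid : (∑ i ∈ Finset.range (n + 2), (-(k + i)) * (a i * b (n + 1 - i)))
        + (∑ i ∈ Finset.range (n + 2), (k + ((n : ℝ) + 1 - i)) * (a i * b (n + 1 - i)))
      = (∑ i ∈ Finset.range (n + 2), ((n + 1 - i : ℕ) : ℝ) * (a i * b (n + 1 - i)))
        - ∑ i ∈ Finset.range (n + 2), (i : ℝ) * (a i * b (n + 1 - i)) := by
    rw [← Finset.sum_add_distrib, ← Finset.sum_sub_distrib]
    refine Finset.sum_congr rfl fun i hi => ?_
    rw [Finset.mem_range] at hi
    have h3 : ((n + 1 - i : ℕ) : ℝ) = (n : ℝ) + 1 - i := by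
      have : i ≤ n + 1 := by omega
      push_cast [Nat.cast_sub this]; ring
    rw [h3]; ring
  rw [main, S1eq, S2eq, mid, T1eq, T2eq, pp, Finset.mul_sum, ← Finset.sum_sub_distrib]
  refine Finset.sum_congr rfl fun i _ => ?_
  ring


lemma pp_eq (k : ℝ) : ∀ n : ℕ,
    pp k n = if Even n then poch k (n / 2) / (Nat.factorial (n / 2)) else 0 := by
  intro n
  induction n using Nat.twoStepInduction with
  | zero => simp [pp, pa, pb, poch_zero]
  | one =>
    have : pp k 1 = pa k 0 * pb k 1 + pa k 1 * pb k 0 := by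
      simp [pp, Finset.sum_range_succ]
    rw [this]
    simp [pa, pb, poch_zero]
  | more n ih _ =>
    have hrec := pp_rec k n
    have hne : ((n : ℝ) + 2) ≠ 0 := by positivity
    have hpp : pp k (n + 2) = ((n : ℝ) + 2 * k) / ((n : ℝ) + 2) * pp k n := by
      field_simp
      linarith [hrec]
    rw [hpp, ih]
    by_cases he : Even n
    · obtain ⟨m, hm⟩ := he
      have hm2 : n = 2 * m := by omega
      subst hm2
      have h1 : (2 * m + 2) / 2 = m + 1 := by omega
      have h2 : (2 * m) / 2 = m := by omega
      have hev1 : Even (2 * m) := ⟨m, by ring⟩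
      have hev2 : Even (2 * m + 2) := ⟨m + 1, by ring⟩
      rw [if_pos hev1, if_pos hev2, h1, h2, poch_succ, Nat.factorial_succ]
      have := fact_ne m
      have hm1 : ((m : ℝ) + 1) ≠ 0 := by positivity
      field_simp
      push_cast
      ring
    · rw [if_neg he, if_neg (by simpa [Nat.even_add_one, Nat.even_add] using he), mul_zero]

lemma keyB (k : ℝ) (n : ℕ) :
    ∑ ij ∈ Finset.HasAntidiagonal.antidiagonal n, pa k ij.1 * pb k ij.2
      = if Even n then poch k (n / 2) / (Nat.factorial (n / 2)) else 0 := by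
  rw [← pp_eq, pp, Finset.Nat.sum_antidiagonal_eq_sum_range_succ_mk]


lemma step {M : Type*} [AddCommMonoid M] (k n : ℕ) (g : (Fin (k + 1) → ℕ) → M) :
    ∑ t ∈ Finset.Nat.antidiagonalTuple (k + 1) n, g t
      = ∑ ij ∈ Finset.HasAntidiagonal.antidiagonal n, ∑ t ∈ Finset.Nat.antidiagonalTuple k ij.2,
          g (Fin.cons ij.1 t) := by
  rw [Finset.sum_sigma']
  refine Finset.sum_nbij'
    (i := fun (t : Fin (k + 1) → ℕ) =>
      (⟨(t 0, ∑ s : Fin k, t s.succ), Fin.tail t⟩ : (_ : ℕ × ℕ) × (Fin k → ℕ)))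
    (j := fun q => Fin.cons q.1.1 q.2) ?_ ?_ ?_ ?_ ?_
  · intro t ht
    rw [Finset.Nat.mem_antidiagonalTuple, Fin.sum_univ_succ] at ht
    simp only [Finset.mem_sigma, Finset.Nat.mem_antidiagonalTuple, Finset.HasAntidiagonal.mem_antidiagonal]
    exact ⟨ht, rfl⟩
  · intro q hq
    simp only [Finset.mem_sigma, Finset.Nat.mem_antidiagonalTuple,
      Finset.HasAntidiagonal.mem_antidiagonal] at hq
    rw [Finset.Nat.mem_antidiagonalTuple, Fin.sum_univ_succ]
    simp only [Fin.cons_zero, Fin.cons_succ]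
    rw [hq.2, hq.1]
  · intro t _
    exact Fin.cons_self_tail t
  · rintro ⟨⟨a, b⟩, t⟩ hq
    simp only [Finset.mem_sigma, Finset.Nat.mem_antidiagonalTuple,
      Finset.HasAntidiagonal.mem_antidiagonal] at hq
    simp only [Fin.cons_zero, Fin.cons_succ, Fin.tail_cons, hq.2]
  · intro t ht
    rw [Fin.cons_self_tail t]

lemma lemG (k : ℕ) (f : Fin k → ℕ → ℝ) (n : ℕ) :
    ∑ t ∈ Finset.Nat.antidiagonalTuple k n, ∏ s, f s (t s)
      = PowerSeries.coeff n (∏ s, PowerSeries.mk (f s)) := by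
  induction k generalizing n with
  | zero =>
    cases n with
    | zero => simp
    | succ n => simp
  | succ k ih =>
    rw [step, Fin.prod_univ_succ, PowerSeries.coeff_mul]
    · refine Finset.sum_congr rfl fun ij _ => ?_
      rw [PowerSeries.coeff_mk, ← ih, Finset.mul_sum]
      refine Finset.sum_congr rfl fun t _ => ?_
      rw [Fin.prod_univ_succ]
      simp [Fin.cons_zero, Fin.cons_succ]


lemma split {M : Type*} [CommMonoid M] (p : ℕ) (g : Fin (2 * p) → M) :
    ∏ s, g s = (∏ i : Fin p, g ⟨i.1, by omega⟩) * ∏ i : Fin p, g ⟨i.1 + p, by omega⟩ := by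
  have h : p + p = 2 * p := (two_mul p).symm
  rw [← Equiv.prod_comp (finCongr h) g, Fin.prod_univ_add]
  congr 1
  refine Finset.prod_congr rfl fun i _ => ?_
  congr 1
  exact Fin.ext (by simp [Nat.add_comm])

lemma pairmul (k x : ℝ) :
    (PowerSeries.mk fun i => pa k i * x ^ i) * (PowerSeries.mk fun j => pb k j * x ^ j)
      = PowerSeries.mk fun n =>
          if Even n then poch k (n / 2) * x ^ n / (Nat.factorial (n / 2)) else 0 := by
  ext n
  rw [PowerSeries.coeff_mul, PowerSeries.coeff_mk]
  have h1 : ∀ ij ∈ Finset.HasAntidiagonal.antidiagonal n,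
      (PowerSeries.coeff ij.1) (PowerSeries.mk fun i => pa k i * x ^ i) *
        (PowerSeries.coeff ij.2) (PowerSeries.mk fun j => pb k j * x ^ j)
      = pa k ij.1 * pb k ij.2 * x ^ n := by
    intro ij hij
    rw [Finset.HasAntidiagonal.mem_antidiagonal] at hij
    rw [PowerSeries.coeff_mk, PowerSeries.coeff_mk, ← hij, pow_add]
    ring
  rw [Finset.sum_congr rfl h1, ← Finset.sum_mul, keyB]
  split_ifs with h
  · ring
  · simp


end Aux

theorem stmt5 (p N : ℕ) (hp : 1 ≤ p) (k : ℝ) (x : Fin p → ℝ) :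
    ∑ t ∈ Finset.Nat.antidiagonalTuple (2 * p) (2 * N),
        (-1 : ℝ) ^ (∑ s : Fin p, t (Fin.castLE (by omega) s)) *
          (∏ s : Fin (2 * p), poch k (t s) / (Nat.factorial (t s) : ℝ)) *
          ∏ s : Fin p,
            x s ^ (t (Fin.castLE (by omega) s) + t ⟨s.1 + p, by have := s.isLt; omega⟩) =
      ∑ m ∈ Finset.Nat.antidiagonalTuple p N,
        ∏ s : Fin p, poch k (m s) * x s ^ (2 * m s) / (Nat.factorial (m s) : ℝ) := by
  classical
  have hle : p ≤ 2 * p := by omega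
  set y : Fin (2 * p) → ℝ :=
    fun s => if h : s.1 < p then -x ⟨s.1, h⟩ else x ⟨s.1 - p, by omega⟩ with hy
  have hyc : ∀ i : Fin p, y (Fin.castLE hle i) = -x i := by
    intro i
    simp only [hy, Fin.castLE]
    rw [dif_pos i.2]
  have hyn : ∀ i : Fin p, y ⟨i.1 + p, by omega⟩ = x i := by
    intro i
    simp only [hy]
    rw [dif_neg (by omega)]
    congr 1
    exact Fin.ext (by simp)
  -- Step 1: rewrite summand as a single product over Fin (2*p)
  have step1 : ∀ t : Fin (2 * p) → ℕ,
      (-1 : ℝ) ^ (∑ s : Fin p, t (Fin.castLE hle s)) *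
          (∏ s : Fin (2 * p), poch k (t s) / (Nat.factorial (t s) : ℝ)) *
          ∏ s : Fin p,
            x s ^ (t (Fin.castLE hle s) + t ⟨s.1 + p, by have := s.isLt; omega⟩)
        = ∏ s : Fin (2 * p), pb k (t s) * y s ^ (t s) := by
    intro t
    rw [Finset.prod_mul_distrib]
    have e2 : ∏ s : Fin (2 * p), y s ^ t s
        = (∏ i : Fin p, y (Fin.castLE hle i) ^ t (Fin.castLE hle i)) *
          ∏ i : Fin p, y ⟨i.1 + p, by omega⟩ ^ t ⟨i.1 + p, by omega⟩ :=
      split p (fun s => y s ^ t s)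
    have e3 : ∏ i : Fin p, y (Fin.castLE hle i) ^ t (Fin.castLE hle i)
        = (-1 : ℝ) ^ (∑ s : Fin p, t (Fin.castLE hle s)) *
          ∏ i : Fin p, x i ^ t (Fin.castLE hle i) := by
      rw [← Finset.prod_pow_eq_pow_sum, ← Finset.prod_mul_distrib]
      refine Finset.prod_congr rfl fun i _ => ?_
      rw [hyc i, neg_pow]
    have e4 : ∏ i : Fin p, y ⟨i.1 + p, by omega⟩ ^ t ⟨i.1 + p, by omega⟩
        = ∏ i : Fin p, x i ^ t ⟨i.1 + p, by omega⟩ := by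
      refine Finset.prod_congr rfl fun i _ => ?_
      rw [hyn i]
    rw [e2, e3, e4]
    have e5 : ∏ s : Fin p,
        x s ^ (t (Fin.castLE hle s) + t ⟨s.1 + p, by have := s.isLt; omega⟩)
        = (∏ i : Fin p, x i ^ t (Fin.castLE hle i)) *
          ∏ i : Fin p, x i ^ t ⟨i.1 + p, by omega⟩ := by
      rw [← Finset.prod_mul_distrib]
      refine Finset.prod_congr rfl fun i _ => ?_
      rw [pow_add]
    have e6 : ∏ s : Fin (2 * p), poch k (t s) / (Nat.factorial (t s) : ℝ)
        = ∏ s : Fin (2 * p), pb k (t s) := rfl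
    rw [e5, e6]
    ring
  rw [Finset.sum_congr rfl fun t _ => step1 t]
  -- Step 2: power series
  have G1 : ∑ t ∈ Finset.Nat.antidiagonalTuple (2 * p) (2 * N),
      ∏ s : Fin (2 * p), pb k (t s) * y s ^ t s
      = PowerSeries.coeff (2 * N) (∏ s : Fin (2 * p), PowerSeries.mk fun i => pb k i * y s ^ i) :=
    lemG (2 * p) (fun s i => pb k i * y s ^ i) (2 * N)
  rw [G1]
  -- Step 3: split the series product into pairs
  have step3 : (∏ s : Fin (2 * p), PowerSeries.mk fun i => pb k i * y s ^ i)
      = ∏ s : Fin p, PowerSeries.mk fun n =>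
          if Even n then poch k (n / 2) * x s ^ n / (Nat.factorial (n / 2)) else 0 := by
    rw [split p fun s => PowerSeries.mk fun i => pb k i * y s ^ i, ← Finset.prod_mul_distrib]
    refine Finset.prod_congr rfl fun i _ => ?_
    have h1 : (Fin.mk i.1 (by omega) : Fin (2 * p)) = Fin.castLE hle i := rfl
    rw [h1, hyc i, hyn i, ← pairmul k (x i)]
    congr 1
    ext j
    simp only [PowerSeries.coeff_mk]
    rw [neg_pow]
    simp only [pa]
    ring
  have G2 : ∑ t ∈ Finset.Nat.antidiagonalTuple p (2 * N),
      ∏ s : Fin p,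
        (if Even (t s) then poch k (t s / 2) * x s ^ (t s) / (Nat.factorial (t s / 2)) else 0)
      = PowerSeries.coeff (2 * N) (∏ s : Fin p, PowerSeries.mk fun n =>
          if Even n then poch k (n / 2) * x s ^ n / (Nat.factorial (n / 2)) else 0) :=
    lemG p (fun s n => if Even n then poch k (n / 2) * x s ^ n / (Nat.factorial (n / 2)) else 0)
      (2 * N)
  rw [step3, ← G2]
  -- Step 4: restrict to even tuples and reindex
  have step4 : ∑ t ∈ Finset.Nat.antidiagonalTuple p (2 * N),
      ∏ s : Fin p,
        (if Even (t s) then poch k (t s / 2) * x s ^ (t s) / (Nat.factorial (t s / 2)) else 0)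
      = ∑ t ∈ (Finset.Nat.antidiagonalTuple p (2 * N)).filter (fun t => ∀ s, Even (t s)),
        ∏ s : Fin p,
          (if Even (t s) then poch k (t s / 2) * x s ^ (t s) / (Nat.factorial (t s / 2)) else 0) := by
    refine (Finset.sum_filter_of_ne fun t _ hne s => ?_).symm
    by_contra hodd
    exact hne (Finset.prod_eq_zero (Finset.mem_univ s) (if_neg hodd))
  rw [step4]
  refine Finset.sum_nbij' (i := fun t s => t s / 2) (j := fun m s => 2 * m s) ?_ ?_ ?_ ?_ ?_
  · intro t ht
    rw [Finset.mem_filter, Finset.Nat.mem_antidiagonalTuple] at ht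
    rw [Finset.Nat.mem_antidiagonalTuple]
    have h2 : ∀ s, 2 * (t s / 2) = t s := fun s => Nat.two_mul_div_two_of_even (ht.2 s)
    have : 2 * ∑ s, t s / 2 = 2 * N := by
      rw [Finset.mul_sum]
      rw [Finset.sum_congr rfl fun s _ => h2 s]
      exact ht.1
    show ∑ s, t s / 2 = N
    omega
  · intro m hm
    rw [Finset.Nat.mem_antidiagonalTuple] at hm
    rw [Finset.mem_filter, Finset.Nat.mem_antidiagonalTuple]
    constructor
    · rw [← Finset.mul_sum, hm]
    · exact fun s => ⟨m s, by ring⟩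
  · intro t ht
    rw [Finset.mem_filter] at ht
    funext s
    exact Nat.two_mul_div_two_of_even (ht.2 s)
  · intro m _
    funext s
    show 2 * m s / 2 = m s
    omega
  · intro t ht
    rw [Finset.mem_filter] at ht
    refine Finset.prod_congr rfl fun s _ => ?_
    rw [if_pos (ht.2 s)]
    rw [← Nat.two_mul_div_two_of_even (ht.2 s)]
    simp [Nat.mul_div_cancel_left]
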